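/- arXiv:1907.01600 — 2 statements merged into one kernel-verified Lean document; each statement's English description precedes it below -/
import Mathlib

section
/- Let x and y be $-terminal strings and let ρ be an underlying function such that both τ(x,ρ) and τ(y,ρ) are complete. Then h_ρ(x) = h_ρ(y) if and only if the grid walk g(x,y,ρ) is alive. Moreover, if h_ρ(x) = h_ρ(y), then |τ(x,ρ)| = |τ(y,ρ)| and, at the end of the walk, i(x,|τ(x,ρ)|,ρ) = |x| and i(y,|τ(y,ρ)|,ρ) = |y| (the walk reaches the final corner of the grid). -/
open MeasureTheory

namespace EditLSH

/-- Hash operations: hash-insert, hash-replace, hash-match. -/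
inductive HashOp | ins | rep | mat
  deriving DecidableEq

/-- Grid walk characters. -/
inductive GOp | gins | gdel | grep | gloop | gmat | gstop
  deriving DecidableEq

/-- Transformation operations. -/
inductive TOp | tins | tdel | trep
  deriving DecidableEq

/-- `p_a = √(p/(1+p))`. -/
noncomputable def pa (p : ℝ) : ℝ := Real.sqrt (p / (1 + p))

/-- `p_r = √p/(√(1+p) − √p)`. -/
noncomputable def prr (p : ℝ) : ℝ := Real.sqrt p / (Real.sqrt (1 + p) - Real.sqrt p)

/-- `L = 8d/(1−p_a) + 6 ln n`. -/
noncomputable def Lreal (p : ℝ) (d n : ℕ) : ℝ := 8 * d / (1 - pa p) + 6 * Real.log n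

/-- The number of valid hash positions: `k` is a valid position iff `(k : ℝ) < Lreal p d n`
iff `k < LN p d n`. -/
noncomputable def LN (p : ℝ) (d n : ℕ) : ℕ := ⌈Lreal p d n⌉₊

/-- An underlying function: a map from (character, hash position) pairs to pairs of reals.
Characters are `Option α`, where `none` plays the role of the special character `$`. -/
abbrev Ufun (α : Type) (p : ℝ) (d n : ℕ) : Type := (Option α × Fin (LN p d n)) → ℝ × ℝ

/-- Extend an underlying function to all of `ℕ` (positions `≥ L` are never queried). -/
noncomputable def ext {α : Type} (p : ℝ) (d n : ℕ) (ρ : Ufun α p d n) :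
    Option α × ℕ → ℝ × ℝ :=
  fun ck => if h : ck.2 < LN p d n then ρ (ck.1, ⟨ck.2, h⟩) else (1, 1)

/-- A string is `$`-terminal if its last character is `$` (i.e. `none`) and `$` occurs
nowhere else. -/
def DollarTerminal {α : Type} (x : List (Option α)) : Prop :=
  ∃ w : List α, x = w.map some ++ [none]

/-- The transcript of the hash computation: the list of operations performed by the
while loop, given the remaining input, the fuel `LN - k`, and the current output length `k`. -/
noncomputable def transcriptAux {α : Type} (pav prv : ℝ) (ρ : Option α × ℕ → ℝ × ℝ) :
    ℕ → List (Option α) → ℕ → List HashOp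
  | 0, _, _ => []
  | _ + 1, [], _ => []
  | fuel + 1, c :: rest, k =>
    if (ρ (c, k)).1 ≤ pav then HashOp.ins :: transcriptAux pav prv ρ fuel (c :: rest) (k + 1)
    else if (ρ (c, k)).2 ≤ prv then HashOp.rep :: transcriptAux pav prv ρ fuel rest (k + 1)
    else HashOp.mat :: transcriptAux pav prv ρ fuel rest (k + 1)

/-- The hash string produced by the while loop.  Output characters live in
`Option (Option α)`, with `none` playing the role of `⊥`. -/
noncomputable def hashAux {α : Type} (pav prv : ℝ) (ρ : Option α × ℕ → ℝ × ℝ) :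
    ℕ → List (Option α) → ℕ → List (Option (Option α))
  | 0, _, _ => []
  | _ + 1, [], _ => []
  | fuel + 1, c :: rest, k =>
    if (ρ (c, k)).1 ≤ pav then none :: hashAux pav prv ρ fuel (c :: rest) (k + 1)
    else if (ρ (c, k)).2 ≤ prv then none :: hashAux pav prv ρ fuel rest (k + 1)
    else some c :: hashAux pav prv ρ fuel rest (k + 1)

/-- The transcript `τ(x,ρ)`. -/
noncomputable def transcript {α : Type} (p : ℝ) (d n : ℕ) (ρ : Ufun α p d n)
    (x : List (Option α)) : List HashOp :=
  transcriptAux (pa p) (prr p) (ext p d n ρ) (LN p d n) x 0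

/-- The hash `h_ρ(x)` of an (already `$`-terminal) string `x`. -/
noncomputable def hash {α : Type} (p : ℝ) (d n : ℕ) (ρ : Ufun α p d n)
    (x : List (Option α)) : List (Option (Option α)) :=
  hashAux (pa p) (prr p) (ext p d n ρ) (LN p d n) x 0

/-- `τ(x,ρ)` is complete if `|τ(x,ρ)| < L`. -/
noncomputable def CompleteT (p : ℝ) (d n : ℕ) (τ : List HashOp) : Prop :=
  (τ.length : ℝ) < Lreal p d n

/-- The index function `i(x,k,ρ)`: the scanning index just before the `(k+1)`-st operation,
i.e. the number of non-hash-insert operations among the first `k` operations. -/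
noncomputable def idx {α : Type} (p : ℝ) (d n : ℕ) (ρ : Ufun α p d n)
    (x : List (Option α)) (k : ℕ) : ℕ :=
  ((transcript p d n ρ x).take k).countP (fun op => decide (op ≠ HashOp.ins))

/-- The `k`-th character `g_k(x,y,ρ)` of the grid walk. -/
noncomputable def gridChar {α : Type} [DecidableEq α] (p : ℝ) (d n : ℕ) (ρ : Ufun α p d n)
    (x y : List (Option α)) (k : ℕ) : GOp :=
  if k < min (transcript p d n ρ x).length (transcript p d n ρ y).length then
    if x[idx p d n ρ x k]? ≠ y[idx p d n ρ y k]? then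
      match (transcript p d n ρ x).getD k HashOp.ins, (transcript p d n ρ y).getD k HashOp.ins with
      | HashOp.rep, HashOp.rep => GOp.grep
      | HashOp.rep, HashOp.ins => GOp.gdel
      | HashOp.ins, HashOp.rep => GOp.gins
      | HashOp.ins, HashOp.ins => GOp.gloop
      | _, _ => GOp.gstop
    else
      match (transcript p d n ρ x).getD k HashOp.ins with
      | HashOp.ins => GOp.gloop
      | _ => GOp.gmat
  else GOp.gstop

/-- The grid walk `g(x,y,ρ)`: a sequence of length `max(|τ(x,ρ)|,|τ(y,ρ)|)`. -/
noncomputable def gridWalk {α : Type} [DecidableEq α] (p : ℝ) (d n : ℕ) (ρ : Ufun α p d n)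
    (x y : List (Option α)) : List GOp :=
  (List.range (max (transcript p d n ρ x).length (transcript p d n ρ y).length)).map
    (gridChar p d n ρ x y)

/-- The grid walk is alive: both transcripts are complete and no `stop` occurs. -/
noncomputable def Alive {α : Type} [DecidableEq α] (p : ℝ) (d n : ℕ) (ρ : Ufun α p d n)
    (x y : List (Option α)) : Prop :=
  CompleteT p d n (transcript p d n ρ x) ∧ CompleteT p d n (transcript p d n ρ y) ∧
    GOp.gstop ∉ gridWalk p d n ρ x y

/-- The uniform probability measure on `[0,1) × [0,1)`. -/
noncomputable def unif01 : Measure (ℝ × ℝ) :=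
  (volume.restrict (Set.Ico (0 : ℝ) 1)).prod (volume.restrict (Set.Ico (0 : ℝ) 1))

instance : SigmaFinite unif01 := by unfold unif01; infer_instance

/-- The probability measure on underlying functions: all values independent, each
coordinate uniform on `[0,1)`. -/
noncomputable def μU (α : Type) [Fintype α] (p : ℝ) (d n : ℕ) : Measure (Ufun α p d n) :=
  Measure.pi fun _ : Option α × Fin (LN p d n) => unif01

/-- Costs for the Levenshtein distance (ported verbatim from the removed Mathlib file
`Mathlib/Data/List/EditDistance/Defs.lean`). -/
structure Levenshtein.Cost (α β δ : Type) where
  delete : α → δ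
  insert : β → δ
  substitute : α → β → δ

/-- The default cost: every insertion, deletion and substitution of distinct letters costs 1. -/
def Levenshtein.defaultCost {α : Type} [DecidableEq α] : Levenshtein.Cost α α ℕ where
  delete _ := 1
  insert _ := 1
  substitute a b := if a = b then 0 else 1

/-- Auxiliary step of the Levenshtein dynamic program (old Mathlib `Levenshtein.impl`). -/
def Levenshtein.impl {α β δ : Type} [AddZeroClass δ] [Min δ] (C : Levenshtein.Cost α β δ)
    (xs : List α) (y : β) (d : {r : List δ // 0 < r.length}) :
    {r : List δ // 0 < r.length} :=
  let ⟨ds, w⟩ := d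
  xs.zip (ds.zip ds.tail) |>.foldr
    (init := ⟨[C.insert y + ds.getLast (List.length_pos_iff.mp w)], by simp⟩)
    (fun ⟨x, d₀, d₁⟩ ⟨r, w⟩ =>
      ⟨min (C.delete x + r[0]) (min (C.insert y + d₀) (C.substitute x y + d₁)) :: r, by simp⟩)

/-- Levenshtein distances of all suffixes (old Mathlib `suffixLevenshtein`). -/
def suffixLevenshtein {α β δ : Type} [AddZeroClass δ] [Min δ] (C : Levenshtein.Cost α β δ)
    (xs : List α) (ys : List β) : {r : List δ // 0 < r.length} :=
  ys.foldr
    (Levenshtein.impl C xs)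
    (xs.foldr (init := ⟨[0], by simp⟩) (fun a ⟨r, w⟩ => ⟨(C.delete a + r[0]) :: r, by simp⟩))

/-- The Levenshtein distance (old Mathlib `levenshtein`). -/
def levenshtein {α β δ : Type} [AddZeroClass δ] [Min δ] (C : Levenshtein.Cost α β δ)
    (xs : List α) (ys : List β) : δ :=
  let ⟨r, w⟩ := suffixLevenshtein C xs ys
  r[0]

/-- Edit distance: the minimum number of single-character insertions, deletions and
replacements needed to transform `x` into `y`. -/
def ED {β : Type} [DecidableEq β] (x y : List β) : ℕ :=
  levenshtein Levenshtein.defaultCost x y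

/-- The smallest index at which `s` and `y` differ (`0` if `s = y`). -/
def firstDiff {β : Type} [DecidableEq β] (s y : List β) : ℕ :=
  (((List.range (max s.length y.length + 1)).find? fun i => decide (s[i]? ≠ y[i]?)).getD 0)

/-- Apply a single transformation operation to `s`, greedily relative to `y`. -/
def applyOp {β : Type} [DecidableEq β] [Inhabited β] (y s : List β) : TOp → List β
  | TOp.tins => s.insertIdx (firstDiff s y) (y.getD (firstDiff s y) default)
  | TOp.tdel => s.eraseIdx (firstDiff s y)
  | TOp.trep => s.set (firstDiff s y) (y.getD (firstDiff s y) default)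

/-- `T(x,y)`: greedily apply the transformation `T` to `x`, relative to `y`. -/
def applyT {β : Type} [DecidableEq β] [Inhabited β] (x y : List β) (T : List TOp) : List β :=
  T.foldl (fun s op => applyOp y s op) x

/-- `T` is valid for `x` and `y`. -/
def ValidT {β : Type} (T : List TOp) (x y : List β) : Prop :=
  T.countP (fun o => decide (o = TOp.tdel ∨ o = TOp.trep)) ≤ x.length ∧
    T.countP (fun o => decide (o = TOp.tins ∨ o = TOp.trep)) ≤ y.length

/-- `T` solves `x` and `y`. -/
def Solves {β : Type} [DecidableEq β] [Inhabited β] (T : List TOp) (x y : List β) : Prop :=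
  ValidT T x y ∧ applyT x y T = y ∧ ∀ i < T.length, applyT x y (T.take i) ≠ y

/-- Convert a grid walk character to a transformation operation (dropping loop/match/stop). -/
def toTOp : GOp → Option TOp
  | GOp.gins => some TOp.tins
  | GOp.gdel => some TOp.tdel
  | GOp.grep => some TOp.trep
  | _ => none

open Classical in
/-- The transformation `𝒯(x,y,ρ)` induced by `x`, `y` and `ρ`. -/
noncomputable def inducedT {α : Type} [DecidableEq α] (p : ℝ) (d n : ℕ) (ρ : Ufun α p d n)
    (x y : List (Option α)) : List TOp :=
  if Alive p d n ρ x y then (gridWalk p d n ρ x y).filterMap toTOp else []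

/-- Nodes of the graph `G(x,y)`: grid nodes `(i,j)` plus the stop node (`none`). -/
abbrev Node : Type := Option (ℕ × ℕ)

/-- The arcs of `G(x,y)`: `stepG x y v op = some v'` iff there is an arc labelled `op`
from `v` to `v'`; `none` means no outgoing arc with that label. -/
def stepG {α : Type} [DecidableEq α] (x y : List (Option α)) : Node → GOp → Option Node
  | none, _ => some none
  | some (i, j), op =>
    if i < x.length ∧ j < y.length then
      if i < x.length - 1 ∧ j < y.length - 1 then
        if x[i]? ≠ y[j]? then
          match op with
          | GOp.gdel => some (some (i + 1, j))
          | GOp.grep => some (some (i + 1, j + 1))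
          | GOp.gins => some (some (i, j + 1))
          | GOp.gloop => some (some (i, j))
          | GOp.gstop => some none
          | GOp.gmat => none
        else
          match op with
          | GOp.gmat => some (some (i + 1, j + 1))
          | GOp.gloop => some (some (i, j))
          | _ => none
      else if i = x.length - 1 ∧ j < y.length - 1 then
        match op with
        | GOp.gins => some (some (i, j + 1))
        | GOp.gloop => some (some (i, j))
        | GOp.gdel | GOp.grep | GOp.gstop => some none
        | GOp.gmat => none
      else if i < x.length - 1 ∧ j = y.length - 1 then
        match op with
        | GOp.gdel => some (some (i + 1, j))
        | GOp.gloop => some (some (i, j))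
        | GOp.gins | GOp.grep | GOp.gstop => some none
        | GOp.gmat => none
      else
        match op with
        | GOp.gloop => some (some (i, j))
        | _ => none
    else none

/-- Follow a list of grid-walk characters through `G(x,y)` starting at node `v`;
returns `none` if at some step the required arc does not exist. -/
def walkFrom {α : Type} [DecidableEq α] (x y : List (Option α)) : Node → List GOp → Option Node
  | v, [] => some v
  | v, op :: rest =>
    match stepG x y v op with
    | none => none
    | some v' => walkFrom x y v' rest


/-- The operation performed when scanning character `c` at output position `j`. -/
noncomputable def opOf {α : Type} (pav prv : ℝ) (ρ : Option α × ℕ → ℝ × ℝ)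
    (c : Option α) (j : ℕ) : HashOp :=
  if (ρ (c, j)).1 ≤ pav then HashOp.ins
  else if (ρ (c, j)).2 ≤ prv then HashOp.rep else HashOp.mat

lemma hashAux_length {α : Type} (pav prv : ℝ) (ρ : Option α × ℕ → ℝ × ℝ) :
    ∀ fuel (s : List (Option α)) k,
      (hashAux pav prv ρ fuel s k).length = (transcriptAux pav prv ρ fuel s k).length
  | 0, _, _ => rfl
  | _ + 1, [], _ => rfl
  | fuel + 1, c :: rest, k => by
    simp only [hashAux, transcriptAux]
    split_ifs <;> simp [hashAux_length pav prv ρ fuel]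

lemma transcriptAux_countP {α : Type} (pav prv : ℝ) (ρ : Option α × ℕ → ℝ × ℝ) :
    ∀ fuel (s : List (Option α)) k,
      (transcriptAux pav prv ρ fuel s k).length < fuel →
      (transcriptAux pav prv ρ fuel s k).countP (fun op => decide (op ≠ HashOp.ins))
        = s.length
  | 0, _, _ => by intro h; exact absurd h (Nat.not_lt_zero _)
  | _ + 1, [], _ => by intro _; rfl
  | fuel + 1, c :: rest, k => by
    intro h
    simp only [transcriptAux] at h ⊢
    split_ifs at h ⊢ with h1 h2
    · simp only [List.length_cons, Nat.add_lt_add_iff_right] at h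
      simpa using transcriptAux_countP pav prv ρ fuel (c :: rest) (k + 1) h
    · simp only [List.length_cons, Nat.add_lt_add_iff_right] at h
      simpa [List.countP_cons] using transcriptAux_countP pav prv ρ fuel rest (k + 1) h
    · simp only [List.length_cons, Nat.add_lt_add_iff_right] at h
      simpa [List.countP_cons] using transcriptAux_countP pav prv ρ fuel rest (k + 1) h

lemma transcriptAux_spec {α : Type} (pav prv : ℝ) (ρ : Option α × ℕ → ℝ × ℝ) :
    ∀ fuel (s : List (Option α)) k m,
      m < (transcriptAux pav prv ρ fuel s k).length →
      ∃ c, s[((transcriptAux pav prv ρ fuel s k).take m).countP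
              (fun op => decide (op ≠ HashOp.ins))]? = some c ∧
        (transcriptAux pav prv ρ fuel s k)[m]? = some (opOf pav prv ρ c (k + m)) ∧
        (hashAux pav prv ρ fuel s k)[m]? =
          some (if opOf pav prv ρ c (k + m) = HashOp.mat then some c else none)
  | 0, _, _, m => by intro h; exact absurd h (Nat.not_lt_zero _)
  | _ + 1, [], _, m => by intro h; exact absurd h (Nat.not_lt_zero _)
  | fuel + 1, c :: rest, k, m => by
    intro h
    simp only [transcriptAux, hashAux] at h ⊢
    split_ifs at h ⊢ with h1 h2
    · -- hash-insert
      cases m with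
      | zero =>
        refine ⟨c, by simp, ?_, ?_⟩ <;> simp [opOf, h1]
      | succ m =>
        simp only [List.length_cons, Nat.add_lt_add_iff_right] at h
        obtain ⟨c', hc1, hc2, hc3⟩ := transcriptAux_spec pav prv ρ fuel (c :: rest) (k + 1) m h
        refine ⟨c', ?_, ?_, ?_⟩
        · simpa [List.countP_cons] using hc1
        · simpa [Nat.add_comm, Nat.add_assoc, Nat.add_left_comm] using hc2
        · simpa [Nat.add_comm, Nat.add_assoc, Nat.add_left_comm] using hc3
    · -- hash-replace
      cases m with
      | zero =>
        refine ⟨c, by simp, ?_, ?_⟩ <;> simp [opOf, h1, h2]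
      | succ m =>
        simp only [List.length_cons, Nat.add_lt_add_iff_right] at h
        obtain ⟨c', hc1, hc2, hc3⟩ := transcriptAux_spec pav prv ρ fuel rest (k + 1) m h
        refine ⟨c', ?_, ?_, ?_⟩
        · simpa [List.countP_cons] using hc1
        · simpa [Nat.add_comm, Nat.add_assoc, Nat.add_left_comm] using hc2
        · simpa [Nat.add_comm, Nat.add_assoc, Nat.add_left_comm] using hc3
    · -- hash-match
      cases m with
      | zero =>
        refine ⟨c, by simp, ?_, ?_⟩ <;> simp [opOf, h1, h2]
      | succ m =>
        simp only [List.length_cons, Nat.add_lt_add_iff_right] at h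
        obtain ⟨c', hc1, hc2, hc3⟩ := transcriptAux_spec pav prv ρ fuel rest (k + 1) m h
        refine ⟨c', ?_, ?_, ?_⟩
        · simpa [List.countP_cons] using hc1
        · simpa [Nat.add_comm, Nat.add_assoc, Nat.add_left_comm] using hc2
        · simpa [Nat.add_comm, Nat.add_assoc, Nat.add_left_comm] using hc3

lemma transcript_spec {α : Type} (p : ℝ) (d n : ℕ) (ρ : Ufun α p d n)
    (x : List (Option α)) (m : ℕ) (hm : m < (transcript p d n ρ x).length) :
    ∃ c, x[idx p d n ρ x m]? = some c ∧
      (transcript p d n ρ x)[m]? = some (opOf (pa p) (prr p) (ext p d n ρ) c m) ∧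
      (hash p d n ρ x)[m]? =
        some (if opOf (pa p) (prr p) (ext p d n ρ) c m = HashOp.mat then some c else none) := by
  simpa [transcript, hash, idx] using
    transcriptAux_spec (pa p) (prr p) (ext p d n ρ) (LN p d n) x 0 m hm

lemma hash_length {α : Type} (p : ℝ) (d n : ℕ) (ρ : Ufun α p d n) (x : List (Option α)) :
    (hash p d n ρ x).length = (transcript p d n ρ x).length :=
  hashAux_length (pa p) (prr p) (ext p d n ρ) (LN p d n) x 0

lemma key_iff {α : Type} [DecidableEq α] (p : ℝ) (d n : ℕ) (ρ : Ufun α p d n)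
    (x y : List (Option α)) (m : ℕ)
    (hmx : m < (transcript p d n ρ x).length) (hmy : m < (transcript p d n ρ y).length) :
    ((hash p d n ρ x)[m]? = (hash p d n ρ y)[m]? ↔ gridChar p d n ρ x y m ≠ GOp.gstop) := by
  obtain ⟨cx, hx1, hx2, hx3⟩ := transcript_spec p d n ρ x m hmx
  obtain ⟨cy, hy1, hy2, hy3⟩ := transcript_spec p d n ρ y m hmy
  have hmin : m < min (transcript p d n ρ x).length (transcript p d n ρ y).length :=
    lt_min hmx hmy
  have hgdx : (transcript p d n ρ x).getD m HashOp.ins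
      = opOf (pa p) (prr p) (ext p d n ρ) cx m := by
    rw [List.getD_eq_getElem?_getD, hx2]; rfl
  have hgdy : (transcript p d n ρ y).getD m HashOp.ins
      = opOf (pa p) (prr p) (ext p d n ρ) cy m := by
    rw [List.getD_eq_getElem?_getD, hy2]; rfl
  by_cases hcc : cx = cy
  · subst hcc
    have : x[idx p d n ρ x m]? = y[idx p d n ρ y m]? := by rw [hx1, hy1]
    rw [hx3, hy3]
    unfold gridChar
    rw [if_pos hmin, hgdx, hgdy]
    rcases hop : opOf (pa p) (prr p) (ext p d n ρ) cx m <;> simp [this]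
  · have hne : x[idx p d n ρ x m]? ≠ y[idx p d n ρ y m]? := by
      rw [hx1, hy1]; simp [hcc]
    rw [hx3, hy3]
    unfold gridChar
    rw [if_pos hmin, if_pos hne, hgdx, hgdy]
    rcases hopx : opOf (pa p) (prr p) (ext p d n ρ) cx m <;>
      rcases hopy : opOf (pa p) (prr p) (ext p d n ρ) cy m <;>
        simp [hcc]

lemma complete_lt_LN {p : ℝ} {d n : ℕ} {τ : List HashOp}
    (h : CompleteT p d n τ) : τ.length < LN p d n :=
  Nat.lt_ceil.mpr h

lemma idx_final {α : Type} (p : ℝ) (d n : ℕ) (ρ : Ufun α p d n) (x : List (Option α))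
    (hc : CompleteT p d n (transcript p d n ρ x)) :
    idx p d n ρ x (transcript p d n ρ x).length = x.length := by
  unfold idx
  rw [List.take_length]
  exact transcriptAux_countP (pa p) (prr p) (ext p d n ρ) (LN p d n) x 0
    (complete_lt_LN hc)

/-- if both transcripts are complete, then `h_ρ(x) = h_ρ(y)` iff the grid walk
is alive; moreover, on collision the transcripts have equal length and the walk reaches the
final corner `(|x|,|y|)` of the grid. -/
theorem stmt3 {α : Type} [Fintype α] [DecidableEq α]
    (p : ℝ) (hp0 : 0 < p) (hp : p ≤ 1 / 3) (n d : ℕ) (hn : 2 ≤ n) (hd : 1 ≤ d)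
    (x y : List (Option α)) (hx : DollarTerminal x) (hy : DollarTerminal y)
    (ρ : Ufun α p d n)
    (hcx : CompleteT p d n (transcript p d n ρ x))
    (hcy : CompleteT p d n (transcript p d n ρ y)) :
    (hash p d n ρ x = hash p d n ρ y ↔ Alive p d n ρ x y) ∧
    (hash p d n ρ x = hash p d n ρ y →
      (transcript p d n ρ x).length = (transcript p d n ρ y).length ∧
      idx p d n ρ x (transcript p d n ρ x).length = x.length ∧
      idx p d n ρ y (transcript p d n ρ y).length = y.length) := by
  classical
  have hlenx := hash_length p d n ρ x
  have hleny := hash_length p d n ρ y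
  have hforward : hash p d n ρ x = hash p d n ρ y →
      (transcript p d n ρ x).length = (transcript p d n ρ y).length := by
    intro h
    rw [← hlenx, ← hleny, h]
  have hmain : hash p d n ρ x = hash p d n ρ y ↔ Alive p d n ρ x y := by
    constructor
    · intro h
      have hlen := hforward h
      refine ⟨hcx, hcy, ?_⟩
      intro hmem
      rw [gridWalk, List.mem_map] at hmem
      obtain ⟨m, hm, hgm⟩ := hmem
      rw [List.mem_range] at hm
      have hmx : m < (transcript p d n ρ x).length := by omega
      have hmy : m < (transcript p d n ρ y).length := by omega
      exact (key_iff p d n ρ x y m hmx hmy).mp (by rw [h]) hgm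
    · rintro ⟨_, _, hns⟩
      have hlen : (transcript p d n ρ x).length = (transcript p d n ρ y).length := by
        by_contra hne
        rcases Nat.lt_or_ge (transcript p d n ρ x).length (transcript p d n ρ y).length with
          hlt | hge
        · apply hns
          rw [gridWalk, List.mem_map]
          refine ⟨(transcript p d n ρ x).length, by rw [List.mem_range]; omega, ?_⟩
          rw [gridChar, if_neg (by omega)]
        · have hlt : (transcript p d n ρ y).length < (transcript p d n ρ x).length := by
            omega
          apply hns
          rw [gridWalk, List.mem_map]
          refine ⟨(transcript p d n ρ y).length, by rw [List.mem_range]; omega, ?_⟩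
          rw [gridChar, if_neg (by omega)]
      apply List.ext_getElem?
      intro m
      by_cases hm : m < (transcript p d n ρ x).length
      · have hmy : m < (transcript p d n ρ y).length := by omega
        refine (key_iff p d n ρ x y m hm hmy).mpr ?_
        intro hstop
        apply hns
        rw [gridWalk, List.mem_map]
        exact ⟨m, by rw [List.mem_range]; omega, hstop⟩
      · rw [List.getElem?_eq_none (by omega), List.getElem?_eq_none (by omega)]
  refine ⟨hmain, fun h => ⟨hforward h, idx_final p d n ρ x hcx, idx_final p d n ρ y hcy⟩⟩

end EditLSH
end

section
/- Let x and y be strings over Σ, neither containing the character $, with ED(x,y) = r. Then: (i) there exists a transformation T of length r that solves x·$ and y·$ (where x·$ denotes x with $ appended); and (ii) there is no transformation T' of length strictly less than r that solves x·$ and y·$. -/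
open MeasureTheory

namespace EditLSH

section
variable {γ β' δ : Type} [AddZeroClass δ] [Min δ] (C : Levenshtein.Cost γ β' δ)

theorem lev_eq (xs : List γ) (ys : List β') :
    levenshtein C xs ys = (suffixLevenshtein C xs ys).1[0]'(suffixLevenshtein C xs ys).2 := rfl

theorem lev_impl_cons (x : γ) (xs : List γ) (y : β') (d₁ d₂ : δ) (ds : List δ) (w) :
    Levenshtein.impl C (x :: xs) y ⟨d₁ :: d₂ :: ds, w⟩ =
      ⟨min (C.delete x + (Levenshtein.impl C xs y ⟨d₂ :: ds, by simp⟩).1[0]'(Levenshtein.impl C xs y ⟨d₂ :: ds, by simp⟩).2)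
        (min (C.insert y + d₁) (C.substitute x y + d₂)) ::
        (Levenshtein.impl C xs y ⟨d₂ :: ds, by simp⟩).1, by simp⟩ := rfl

theorem lev_impl_length (y : β') : ∀ (xs : List γ) (d : {r : List δ // 0 < r.length}),
    d.1.length = xs.length + 1 → (Levenshtein.impl C xs y d).1.length = xs.length + 1
  | [], ⟨[d₁], w⟩, _ => rfl
  | [], ⟨[], w⟩, h => by simp at h
  | [], ⟨_ :: _ :: _, w⟩, h => by simp at h
  | _ :: _, ⟨[], w⟩, h => by simp at h
  | _ :: _, ⟨[_], w⟩, h => by simp at h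
  | x :: xs, ⟨d₁ :: d₂ :: ds, w⟩, h => by
    rw [lev_impl_cons]
    simp only [List.length_cons]
    rw [lev_impl_length y xs ⟨d₂ :: ds, by simp⟩ (by simpa using h)]

theorem sL_cons_nil (x : γ) (xs : List γ) : (suffixLevenshtein C (x :: xs) ([] : List β')).1 =
    (C.delete x + (suffixLevenshtein C xs ([] : List β')).1[0]'(suffixLevenshtein C xs ([] : List β')).2)
      :: (suffixLevenshtein C xs ([] : List β')).1 := rfl

theorem sL_length (xs : List γ) (ys : List β') :
    (suffixLevenshtein C xs ys).1.length = xs.length + 1 := by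
  induction ys with
  | nil =>
    induction xs with
    | nil => rfl
    | cons x xs ih => rw [sL_cons_nil]; simp [ih]
  | cons y ys ih =>
    exact lev_impl_length C y xs (suffixLevenshtein C xs ys) ih

theorem sL_tail (x : γ) (xs : List γ) (ys : List β') :
    (suffixLevenshtein C (x :: xs) ys).1.tail = (suffixLevenshtein C xs ys).1 := by
  induction ys with
  | nil => rfl
  | cons y ys ih =>
    show (Levenshtein.impl C (x :: xs) y (suffixLevenshtein C (x :: xs) ys)).1.tail =
      (Levenshtein.impl C xs y (suffixLevenshtein C xs ys)).1
    generalize suffixLevenshtein C (x :: xs) ys = s at ih ⊢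
    generalize suffixLevenshtein C xs ys = t at ih ⊢
    obtain ⟨_ | ⟨d₁, l⟩, ws⟩ := s
    · simp at ws
    obtain ⟨_ | ⟨d₂, ds⟩, wt⟩ := t
    · simp at wt
    simp only [List.tail_cons] at ih
    subst ih
    rfl

@[simp] theorem levenshtein_nil_nil : levenshtein C ([] : List γ) ([] : List β') = 0 := rfl

@[simp] theorem levenshtein_cons_nil (x : γ) (xs : List γ) :
    levenshtein C (x :: xs) ([] : List β') = C.delete x + levenshtein C xs [] := rfl

@[simp] theorem levenshtein_nil_cons (y : β') (ys : List β') :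
    levenshtein C ([] : List γ) (y :: ys) = C.insert y + levenshtein C [] ys := by
  rw [lev_eq, lev_eq]
  have hl := sL_length C ([] : List γ) ys
  show (Levenshtein.impl C [] y (suffixLevenshtein C [] ys)).1[0]'(Levenshtein.impl C [] y (suffixLevenshtein C [] ys)).2 = _
  generalize suffixLevenshtein C ([] : List γ) ys = s at hl ⊢
  obtain ⟨_ | ⟨a, _ | ⟨b, l⟩⟩, w⟩ := s
  · simp at w
  · rfl
  · simp at hl

theorem levenshtein_cons_cons (x : γ) (xs : List γ) (y : β') (ys : List β') :
    levenshtein C (x :: xs) (y :: ys) =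
      min (C.delete x + levenshtein C xs (y :: ys))
        (min (C.insert y + levenshtein C (x :: xs) ys) (C.substitute x y + levenshtein C xs ys)) := by
  simp only [lev_eq]
  have ht := sL_tail C x xs ys
  show (Levenshtein.impl C (x :: xs) y (suffixLevenshtein C (x :: xs) ys)).1[0]'(Levenshtein.impl C (x :: xs) y (suffixLevenshtein C (x :: xs) ys)).2 =
    min (C.delete x + (Levenshtein.impl C xs y (suffixLevenshtein C xs ys)).1[0]'(Levenshtein.impl C xs y (suffixLevenshtein C xs ys)).2) _
  generalize suffixLevenshtein C (x :: xs) ys = s at ht ⊢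
  generalize suffixLevenshtein C xs ys = t at ht ⊢
  obtain ⟨_ | ⟨d₁, l⟩, ws⟩ := s
  · simp at ws
  obtain ⟨_ | ⟨d₂, ds⟩, wt⟩ := t
  · simp at wt
  simp only [List.tail_cons] at ht
  subst ht
  rfl

end

@[simp] theorem defaultCost_delete {β : Type} [DecidableEq β] (a : β) :
    (Levenshtein.defaultCost : Levenshtein.Cost β β ℕ).delete a = 1 := rfl
@[simp] theorem defaultCost_insert {β : Type} [DecidableEq β] (a : β) :
    (Levenshtein.defaultCost : Levenshtein.Cost β β ℕ).insert a = 1 := rfl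
@[simp] theorem defaultCost_substitute {β : Type} [DecidableEq β] (a b : β) :
    (Levenshtein.defaultCost : Levenshtein.Cost β β ℕ).substitute a b = if a = b then 0 else 1 := rfl

set_option maxHeartbeats 1000000

section
variable {β : Type} [DecidableEq β]

@[simp] lemma ED_nil_left (y : List β) : ED ([] : List β) y = y.length := by
  induction y with
  | nil => simp [ED]
  | cons b t ih => simp [ED] at ih ⊢; omega
@[simp] lemma ED_nil_right (x : List β) : ED x ([] : List β) = x.length := by
  induction x with
  | nil => simp [ED]
  | cons a t ih => simp [ED] at ih ⊢; omega
lemma ED_cons_cons (a b : β) (x y : List β) :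
    ED (a::x) (b::y) = min (1 + ED x (b::y)) (min (1 + ED (a::x) y)
      ((if a = b then 0 else 1) + ED x y)) := by
  simp [ED, levenshtein_cons_cons]
@[simp] lemma ED_refl (x : List β) : ED x x = 0 := by
  induction x with
  | nil => simp
  | cons a t ih => rw [ED_cons_cons]; simp [ih]
lemma ED_le_del (a : β) (x z : List β) : ED (a::x) z ≤ 1 + ED x z := by
  cases z with
  | nil => simp
  | cons c z' => rw [ED_cons_cons]; exact min_le_left _ _
lemma ED_le_ins (c : β) (x z : List β) : ED x (c::z) ≤ 1 + ED x z := by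
  cases x with
  | nil => simp
  | cons a x' => rw [ED_cons_cons]; exact le_trans (min_le_right _ _) (min_le_left _ _)
lemma ED_le_rep (a c : β) (x z : List β) :
    ED (a::x) (c::z) ≤ (if a = c then 0 else 1) + ED x z := by
  rw [ED_cons_cons]; exact le_trans (min_le_right _ _) (min_le_right _ _)
-- new
theorem length_le_ED_left : ∀ x y : List β, y.length ≤ x.length + ED x y
  | [], y => by simp
  | a :: x, [] => by simp
  | a :: x, b :: y => by
    rw [ED_cons_cons]
    have h1 := length_le_ED_left x (b :: y)
    have h2 := length_le_ED_left (a :: x) y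
    have h3 := length_le_ED_left x y
    simp only [List.length_cons] at *
    split_ifs <;> omega
termination_by x y => x.length + y.length

theorem length_le_ED_right : ∀ x y : List β, x.length ≤ y.length + ED x y
  | [], y => by simp
  | a :: x, [] => by simp
  | a :: x, b :: y => by
    rw [ED_cons_cons]
    have h1 := length_le_ED_right x (b :: y)
    have h2 := length_le_ED_right (a :: x) y
    have h3 := length_le_ED_right x y
    simp only [List.length_cons] at *
    split_ifs <;> omega
termination_by x y => x.length + y.length

theorem ED_le_length_add : ∀ x y : List β, ED x y ≤ x.length + y.length
  | [], y => by simp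
  | a :: x, y => by
    have h1 := ED_le_length_add x y
    have h2 := ED_le_del a x y
    simp only [List.length_cons]
    omega
termination_by x y => x.length

theorem ED_triangle : ∀ x y z : List β, ED x z ≤ ED x y + ED y z
  | x, [], z => by
    have := ED_le_length_add x z
    simp; omega
  | [], b :: y, z => by
    have h1 := length_le_ED_left (b :: y) z
    simp only [ED_nil_left, List.length_cons] at *
    omega
  | a :: x, b :: y, [] => by
    have h1 := length_le_ED_right (a :: x) (b :: y)
    simp only [ED_nil_right, List.length_cons] at *
    omega
  | a :: x, b :: y, c :: z => by
    have hxy := ED_cons_cons a b x y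
    have hyz := ED_cons_cons b c y z
    have d1 := ED_triangle x (b::y) (c::z)
    have d3 := ED_triangle (a::x) y (c::z)
    have d4 := ED_triangle x y (c::z)
    have d5 := ED_triangle (a::x) y z
    have d6 := ED_triangle x (b::y) z
    have d7 := ED_triangle x y z
    have d2 := ED_triangle (a::x) (b::y) z
    have u1 := ED_le_ins c (a::x) z
    have u2 := ED_le_del a x (c::z)
    have u3 := ED_le_rep a c x z
    have tri_if : (if a = c then 0 else 1 : ℕ) ≤ (if a = b then 0 else 1) + (if b = c then 0 else 1) := by
      split_ifs <;> (try simp_all) <;> omega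
    omega
termination_by x y z => x.length + y.length + z.length
end

section
variable {β : Type} [DecidableEq β]

lemma ED_cons_cons_same (c : β) (u v : List β) : ED (c::u) (c::v) = ED u v := by
  have t1 := ED_triangle u (c::v) v
  have t1' : ED (c::v) v ≤ 1 + ED v v := ED_le_del c v v
  have t2 := ED_triangle u (c::u) v
  have t2' : ED u (c::u) ≤ 1 + ED u u := ED_le_ins c u u
  have h3 : ED (c::u) (c::v) = min (1 + ED u (c::v)) (min (1 + ED (c::u) v) (ED u v)) := by
    rw [ED_cons_cons]; simp
  simp only [ED_refl] at t1' t2'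
  omega

lemma ED_append_left (p : List β) (u v : List β) : ED (p++u) (p++v) = ED u v := by
  induction p with
  | nil => rfl
  | cons c p ih => simpa [ED_cons_cons_same] using ih

theorem ED_append_singleton (c : β) : ∀ x y : List β, ED (x++[c]) (y++[c]) = ED x y
  | [], [] => by simp
  | [], b :: y => by
    have ih := ED_append_singleton c [] y
    rw [List.nil_append] at ih ⊢
    rw [List.cons_append, ED_cons_cons]
    simp only [ED_nil_left, List.length_append, List.length_cons] at *
    split_ifs <;> omega
  | a :: x, [] => by
    have ih := ED_append_singleton c x []
    rw [List.nil_append] at ih ⊢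
    rw [List.cons_append, ED_cons_cons]
    simp only [ED_nil_right, ED_nil_left, List.length_append, List.length_cons] at *
    split_ifs <;> omega
  | a :: x, b :: y => by
    have ih1 := ED_append_singleton c x (b :: y)
    have ih2 := ED_append_singleton c (a :: x) y
    have ih3 := ED_append_singleton c x y
    rw [List.cons_append, List.cons_append, ED_cons_cons, ED_cons_cons a b]
    rw [List.cons_append] at ih1 ih2
    rw [ih1, ih2, ih3]
termination_by x y => x.length + y.length

theorem ED_eq_zero_iff : ∀ x y : List β, ED x y = 0 ↔ x = y
  | [], y => by cases y <;> simp
  | a :: x, [] => by simp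
  | a :: x, b :: y => by
    have ih := ED_eq_zero_iff x y
    rw [ED_cons_cons]
    constructor
    · intro h
      have h1 : (if a = b then (0:ℕ) else 1) = 0 ∧ ED x y = 0 := by omega
      have hab : a = b := by by_contra hab; simp [hab] at h1
      rw [hab, ih.mp h1.2]
    · intro he
      injection he with h1 h2
      subst h1; subst h2
      simp [ih.mpr rfl]

theorem ED_map_some {γ : Type} [DecidableEq γ] : ∀ x y : List γ,
    ED (x.map (some : γ → Option γ)) (y.map some) = ED x y
  | [], y => by simp
  | a :: x, [] => by simp
  | a :: x, b :: y => by
    have ih1 := ED_map_some x (b :: y)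
    have ih2 := ED_map_some (a :: x) y
    have ih3 := ED_map_some x y
    simp only [List.map_cons] at *
    rw [ED_cons_cons, ED_cons_cons a b, ih1, ih2, ih3]
    congr 2
    simp
termination_by x y => x.length + y.length

end

section
variable {β : Type} [DecidableEq β]

/-! ### single-op distance bounds -/

lemma ED_self_insertIdx : ∀ (j : ℕ) (s : List β) (c : β), ED s (s.insertIdx j c) ≤ 1
  | 0, s, c => by
    have := ED_le_ins c s s
    simpa using this
  | j+1, [], c => by simp
  | j+1, a :: s, c => by
    rw [List.insertIdx_succ_cons, ED_cons_cons_same]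
    exact ED_self_insertIdx j s c

lemma ED_self_eraseIdx : ∀ (j : ℕ) (s : List β), ED s (s.eraseIdx j) ≤ 1
  | 0, [] => by simp
  | 0, a :: s => by
    have := ED_le_del a s s
    simpa using this
  | j+1, [] => by simp
  | j+1, a :: s => by
    rw [List.eraseIdx_cons_succ, ED_cons_cons_same]
    exact ED_self_eraseIdx j s

lemma ED_self_set : ∀ (j : ℕ) (s : List β) (c : β), ED s (s.set j c) ≤ 1
  | 0, [], c => by simp
  | 0, a :: s, c => by
    rw [List.set_cons_zero]
    calc ED (a::s) (c::s) ≤ (if a = c then 0 else 1) + ED s s := ED_le_rep a c s s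
    _ ≤ 1 := by rw [ED_refl]; split_ifs <;> omega
  | j+1, [], c => by simp
  | j+1, a :: s, c => by
    rw [List.set_cons_succ, ED_cons_cons_same]
    exact ED_self_set j s c

/-! ### structural lemmas -/

lemma insertIdx_append_len : ∀ (P l : List β) (c : β),
    (P ++ l).insertIdx P.length c = P ++ c :: l
  | [], l, c => rfl
  | p :: P, l, c => by
    simp only [List.cons_append, List.length_cons, List.insertIdx_succ_cons,
      insertIdx_append_len P l c]

lemma eraseIdx_append_len : ∀ (P : List β) (a : β) (l : List β),
    (P ++ a :: l).eraseIdx P.length = P ++ l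
  | [], a, l => rfl
  | p :: P, a, l => by
    simp only [List.cons_append, List.length_cons, List.eraseIdx_cons_succ,
      eraseIdx_append_len P a l]

lemma set_append_len : ∀ (P : List β) (a b : β) (l : List β),
    (P ++ a :: l).set P.length b = P ++ b :: l
  | [], a, b, l => rfl
  | p :: P, a, b, l => by
    simp only [List.cons_append, List.length_cons, List.set_cons_succ,
      set_append_len P a b l]

lemma map_insertIdx {γ γ' : Type} (f : γ → γ') : ∀ (j : ℕ) (w : List γ) (b : γ),
    (w.map f).insertIdx j (f b) = (w.insertIdx j b).map f
  | 0, w, b => rfl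
  | j+1, [], b => rfl
  | j+1, a :: w, b => by
    simp only [List.map_cons, List.insertIdx_succ_cons, map_insertIdx f j w b]

/-! ### find? / firstDiff -/

lemma find?_range'_spec (p : ℕ → Bool) : ∀ (n s i : ℕ),
    (List.range' s n).find? p = some i → p i = true ∧ ∀ j, s ≤ j → j < i → p j = false
  | 0, s, i => by simp
  | n+1, s, i => by
    intro h
    rw [List.range'_succ, List.find?_cons] at h
    rcases hp : p s with _ | _
    · rw [hp] at h
      have := find?_range'_spec p n (s+1) i h
      refine ⟨this.1, fun j hj1 hj2 => ?_⟩
      rcases Nat.eq_or_lt_of_le hj1 with rfl | hlt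
      · exact hp
      · exact this.2 j hlt hj2
    · rw [hp] at h
      simp only [Option.some.injEq] at h
      subst h
      exact ⟨hp, fun j hj1 hj2 => absurd hj2 (by omega)⟩

lemma exists_diff {s y : List β} (h : s ≠ y) :
    ∃ i < max s.length y.length + 1, s[i]? ≠ y[i]? := by
  by_contra hc
  push_neg at hc
  apply h
  apply List.ext_getElem?
  intro n
  by_cases hn : n < max s.length y.length + 1
  · exact hc n hn
  · rw [List.getElem?_eq_none (l := s) (by omega), List.getElem?_eq_none (l := y) (by omega)]

lemma firstDiff_spec {s y : List β} (h : s ≠ y) :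
    s[firstDiff s y]? ≠ y[firstDiff s y]? ∧ ∀ j < firstDiff s y, s[j]? = y[j]? := by
  obtain ⟨i, hi, hne⟩ := exists_diff h
  unfold firstDiff
  rcases hf : (List.range (max s.length y.length + 1)).find? (fun i => decide (s[i]? ≠ y[i]?)) with _ | j
  · rw [List.find?_eq_none] at hf
    exact absurd (by simpa using hne) (by simpa using hf i (List.mem_range.mpr hi))
  · rw [List.range_eq_range'] at hf
    have := find?_range'_spec _ _ _ _ hf
    simp only [Option.getD_some]
    constructor
    · simpa using this.1
    · intro j' hj'
      have := this.2 j' (Nat.zero_le _) hj'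
      simpa using this

lemma firstDiff_ge {s y : List β} (h : s ≠ y) {m : ℕ}
    (hm : ∀ j < m, s[j]? = y[j]?) : m ≤ firstDiff s y := by
  by_contra hc
  push_neg at hc
  exact (firstDiff_spec h).1 (hm (firstDiff s y) hc)
end

section

variable {β : Type} [DecidableEq β]

/-! ### more structural lemmas -/

lemma map_eraseIdx' {γ γ' : Type} (f : γ → γ') : ∀ (j : ℕ) (w : List γ),
    (w.map f).eraseIdx j = (w.eraseIdx j).map f
  | _, [] => by simp
  | 0, a :: w => rfl
  | j+1, a :: w => by
    simp only [List.map_cons, List.eraseIdx_cons_succ, map_eraseIdx' f j w]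

lemma insertIdx_append_le : ∀ (j : ℕ) (l1 : List β), j ≤ l1.length → ∀ (l2 : List β) (c : β),
    (l1 ++ l2).insertIdx j c = l1.insertIdx j c ++ l2
  | 0, l1, _, l2, c => rfl
  | j+1, [], h, l2, c => by simp at h
  | j+1, a :: l1, h, l2, c => by
    simp only [List.cons_append, List.insertIdx_succ_cons,
      insertIdx_append_le j l1 (by simpa using h) l2 c]

lemma getElem?_append_len (P : List β) (c : β) (l : List β) :
    (P ++ c :: l)[P.length]? = some c := by
  rw [List.getElem?_append_right le_rfl]; simp

/-! ### DollarTerminal utilities -/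

lemma DT_length {α : Type} (w : List α) : (w.map some ++ [none]).length = w.length + 1 := by simp

lemma DT_getElem?_lt {α : Type} {w : List α} {j : ℕ} (hj : j < w.length) :
    (w.map some ++ [none])[j]? = some (some w[j]) := by
  rw [List.getElem?_append_left (by simpa using hj), List.getElem?_map,
    List.getElem?_eq_getElem hj]
  rfl

lemma DT_getElem?_eq {α : Type} (w : List α) :
    (w.map some ++ [none])[w.length]? = some none := by
  have : ((w.map some) ++ [(none : Option α)])[(w.map some).length]? = some none :=
    List.getElem?_concat_length
  simpa using this

lemma DT_take {α : Type} {w : List α} {i : ℕ} (h : i ≤ w.length) :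
    (w.map some ++ [none]).take i = (w.take i).map some := by
  rw [List.take_append_of_le_length (by simpa using h), List.map_take]

lemma DT_drop {α : Type} {w : List α} {i : ℕ} (h : i ≤ w.length) :
    (w.map some ++ [none]).drop i = (w.drop i).map some ++ [none] := by
  rw [List.drop_append_of_le_length (by simpa using h), List.map_drop]

lemma ED_DT {α : Type} [DecidableEq α] (w1 w2 : List α) :
    ED (w1.map some ++ [none]) (w2.map some ++ [none]) = ED w1 w2 := by
  rw [ED_append_singleton, ED_map_some]

lemma firstDiff_self (y : List β) : firstDiff y y = 0 := by
  unfold firstDiff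
  rw [List.find?_eq_none.mpr (by intro x _; simp)]
  rfl

lemma fd_lt_left {α : Type} [DecidableEq α] {s y : List (Option α)}
    (hs : DollarTerminal s) (hy : DollarTerminal y) (hne : s ≠ y) :
    firstDiff s y < s.length := by
  obtain ⟨ws, hws⟩ := hs
  obtain ⟨wy, hwy⟩ := hy
  by_contra hc
  push_neg at hc
  have h1 := (firstDiff_spec hne).1
  have h2 := (firstDiff_spec hne).2
  have hsl : s.length = ws.length + 1 := by rw [hws]; simp
  have hyl : y.length = wy.length + 1 := by rw [hwy]; simp
  have hsn : s[firstDiff s y]? = none := List.getElem?_eq_none (by omega)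
  have hjy : y[ws.length]? = some none := by
    rw [← h2 ws.length (by omega), hws, DT_getElem?_eq]
  have hlen : ws.length = wy.length := by
    rcases lt_trichotomy ws.length wy.length with h | h | h
    · rw [hwy, DT_getElem?_lt h] at hjy
      simp at hjy
    · exact h
    · rw [hwy, List.getElem?_eq_none (by simp; omega)] at hjy
      simp at hjy
  have hyn : y[firstDiff s y]? = none := List.getElem?_eq_none (by omega)
  exact h1 (by rw [hsn, hyn])

lemma fd_lt_right {α : Type} [DecidableEq α] {s y : List (Option α)}
    (hs : DollarTerminal s) (hy : DollarTerminal y) (hne : s ≠ y) :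
    firstDiff s y < y.length := by
  have h := fd_lt_left hy hs (Ne.symm hne)
  have heq : firstDiff s y = firstDiff y s := by
    apply le_antisymm
    · exact firstDiff_ge (Ne.symm hne) (fun j hj => ((firstDiff_spec hne).2 j hj).symm)
    · exact firstDiff_ge hne (fun j hj => ((firstDiff_spec (Ne.symm hne)).2 j hj).symm)
  omega

end

section
variable {β : Type} [DecidableEq β] [Inhabited β]

lemma applyT_nil (s y : List β) : applyT s y [] = s := rfl

lemma applyT_cons (s y : List β) (op : TOp) (T : List TOp) :
    applyT s y (op :: T) = applyT (applyOp y s op) y T := rfl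

lemma ED_applyOp_ge (y s : List β) (op : TOp) :
    ED s y ≤ 1 + ED (applyOp y s op) y := by
  have h1 : ED s (applyOp y s op) ≤ 1 := by
    cases op
    · exact ED_self_insertIdx _ _ _
    · exact ED_self_eraseIdx _ _
    · exact ED_self_set _ _ _
  have h2 := ED_triangle s (applyOp y s op) y
  omega

lemma ED_le_applyT_length (y : List β) : ∀ (T : List TOp) (s : List β),
    applyT s y T = y → ED s y ≤ T.length
  | [], s, h => by rw [applyT_nil] at h; simp [h]
  | op :: T, s, h => by
    rw [applyT_cons] at h
    have hrec := ED_le_applyT_length y T (applyOp y s op) h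
    have := ED_applyOp_ge y s op
    simp only [List.length_cons]
    omega

end

section
variable {α : Type} [DecidableEq α]

/-- The key step lemma. -/
lemma step {s y : List (Option α)} (hs : DollarTerminal s) (hy : DollarTerminal y)
    {k : ℕ} (hED : ED s y = k + 1) :
    ∃ op : TOp, DollarTerminal (applyOp y s op) ∧ ED (applyOp y s op) y = k ∧
      (∀ j < firstDiff s y, (applyOp y s op)[j]? = y[j]?) ∧
      firstDiff s y < s.length ∧ firstDiff s y < y.length ∧
      (op = TOp.tdel → (applyOp y s op).length + 1 = s.length ∧ firstDiff s y + 1 < s.length) ∧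
      (op = TOp.tins → (applyOp y s op).length = s.length + 1 ∧ firstDiff s y + 1 < y.length ∧
        (applyOp y s op)[firstDiff s y]? = y[firstDiff s y]?) ∧
      (op = TOp.trep → (applyOp y s op).length = s.length ∧ firstDiff s y + 1 < s.length ∧
        firstDiff s y + 1 < y.length ∧
        (applyOp y s op)[firstDiff s y]? = y[firstDiff s y]?) := by
  obtain ⟨ws, hws⟩ := hs
  obtain ⟨wy, hwy⟩ := hy
  have hne : s ≠ y := by intro h; rw [h, ED_refl] at hED; omega
  set i := firstDiff s y with hidef
  have hspec1 := (firstDiff_spec hne).1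
  have hspec2 := (firstDiff_spec hne).2
  have hsl : s.length = ws.length + 1 := by rw [hws]; simp
  have hyl : y.length = wy.length + 1 := by rw [hwy]; simp
  have his : i < s.length := fd_lt_left ⟨ws, hws⟩ ⟨wy, hwy⟩ hne
  have hiy : i < y.length := fd_lt_right ⟨ws, hws⟩ ⟨wy, hwy⟩ hne
  have hiws : i ≤ ws.length := by omega
  have hiwy : i ≤ wy.length := by omega
  have hPeq : s.take i = y.take i := by
    apply List.ext_getElem?
    intro n
    rw [List.getElem?_take, List.getElem?_take]
    split
    · exact hspec2 n (by omega)
    · rfl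
  have hPlen : (s.take i).length = i := by rw [List.length_take]; omega
  have hy2 : y = s.take i ++ y.drop i := by rw [hPeq, List.take_append_drop]
  have hkey : ED (s.drop i) (y.drop i) = k + 1 := by
    have h0 : ED (s.take i ++ s.drop i) (s.take i ++ y.drop i) = k + 1 := by
      rw [List.take_append_drop, hPeq, List.take_append_drop]; exact hED
    rwa [ED_append_left] at h0
  have hdropS : s.drop i = (ws.drop i).map some ++ [none] := by rw [hws, DT_drop hiws]
  have hdropY : y.drop i = (wy.drop i).map some ++ [none] := by rw [hwy, DT_drop hiwy]
  have htakeS : s.take i = (ws.take i).map some := by rw [hws, DT_take hiws]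
  have hprefix : ∀ (l : List (Option α)) (j : ℕ), j < i → (s.take i ++ l)[j]? = y[j]? := by
    intro l j hj
    rw [List.getElem?_append_left (by omega), List.getElem?_take, if_pos hj]
    exact hspec2 j hj
  rcases Nat.lt_or_ge i wy.length with hblt | hbge
  · -- y[i] = some wy[i]
    have hdropY1 : y.drop (i+1) = (wy.drop (i+1)).map some ++ [none] := by
      rw [hwy, DT_drop (by omega)]
    set V : List (Option α) := (wy.drop (i+1)).map some ++ [none] with hV
    have hdropY2 : y.drop i = some wy[i] :: V := by
      rw [hdropY, List.drop_eq_getElem_cons hblt]; rfl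
    have hyi : y[i]? = some (some wy[i]) := by rw [hwy]; exact DT_getElem?_lt hblt
    have hgetD : y.getD i default = some wy[i] := by
      rw [List.getD_eq_getElem?_getD, hyi]; rfl
    have hopIns : applyOp y s TOp.tins = s.take i ++ some wy[i] :: s.drop i := by
      show s.insertIdx (firstDiff s y) (y.getD (firstDiff s y) default) = _
      rw [← hidef, hgetD]
      have h1 := insertIdx_append_len (s.take i) (s.drop i) (some wy[i] : Option α)
      rw [List.take_append_drop, hPlen] at h1
      exact h1
    have hopInsAt : (applyOp y s TOp.tins)[i]? = y[i]? := by
      rw [hopIns, hyi]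
      have h1 := getElem?_append_len (s.take i) (some wy[i] : Option α) (s.drop i)
      rw [hPlen] at h1
      exact h1
    have hopInsLen : (applyOp y s TOp.tins).length = s.length + 1 := by
      rw [hopIns]
      simp only [List.length_append, List.length_cons, hPlen, List.length_drop]
      omega
    have hopInsED : ED (s.drop i) V = k → ED (applyOp y s TOp.tins) y = k := by
      intro h
      rw [hopIns]
      conv_lhs => rw [hy2, hdropY2]
      rw [ED_append_left, ED_cons_cons_same]
      exact h
    have hopInsPre : ∀ j < i, (applyOp y s TOp.tins)[j]? = y[j]? := by
      intro j hj; rw [hopIns]; exact hprefix _ j hj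
    rcases Nat.lt_or_ge i ws.length with halt | hage
    · -- Case 3 : both some
      have hdropS1 : s.drop (i+1) = (ws.drop (i+1)).map some ++ [none] := by
        rw [hws, DT_drop (by omega)]
      set U : List (Option α) := (ws.drop (i+1)).map some ++ [none] with hU
      have hdropS2 : s.drop i = some ws[i] :: U := by
        rw [hdropS, List.drop_eq_getElem_cons halt]; rfl
      have hsi : s[i]? = some (some ws[i]) := by rw [hws]; exact DT_getElem?_lt halt
      have hab : (some ws[i] : Option α) ≠ some wy[i] := by
        intro h; exact hspec1 (by rw [hsi, hyi, h])
      have hcc : k + 1 = min (1 + ED U (some wy[i] :: V))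
          (min (1 + ED (some ws[i] :: U) V) (1 + ED U V)) := by
        rw [← hkey, hdropS2, hdropY2, ED_cons_cons, if_neg hab]
      by_cases hdel : ED U (some wy[i] :: V) = k
      · -- delete
        have hop : applyOp y s TOp.tdel = s.take i ++ U := by
          show s.eraseIdx (firstDiff s y) = _
          rw [← hidef, List.eraseIdx_eq_take_drop_succ, hdropS1]
        refine ⟨TOp.tdel, ⟨ws.take i ++ ws.drop (i+1), by rw [hop, htakeS, hU]; simp⟩,
          ?_, ?_, his, hiy, ?_, ?_, ?_⟩
        · rw [hop]
          conv_lhs => rw [hy2]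
          rw [ED_append_left, hdropY2]
          exact hdel
        · intro j hj; rw [hop]; exact hprefix _ j hj
        · intro _
          constructor
          · rw [hop]
            simp only [List.length_append, hPlen, hU, List.length_cons, List.length_map,
              List.length_drop, List.length_nil]
            omega
          · omega
        · intro h; exact absurd h (by decide)
        · intro h; exact absurd h (by decide)
      · by_cases hins : ED (some ws[i] :: U) V = k
        · -- insert
          refine ⟨TOp.tins, ⟨ws.take i ++ wy[i] :: ws.drop i, by
              rw [hopIns, htakeS, hdropS]; simp⟩,
            hopInsED (by rw [hdropS2]; exact hins), hopInsPre, his, hiy, ?_, ?_, ?_⟩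
          · intro h; exact absurd h (by decide)
          · intro _; exact ⟨hopInsLen, by omega, hopInsAt⟩
          · intro h; exact absurd h (by decide)
        · -- replace
          have hrep : ED U V = k := by omega
          have hsdec : s = s.take i ++ some ws[i] :: s.drop (i+1) := by
            conv_lhs => rw [← List.take_append_drop i s, hdropS2]
            rw [hdropS1]
          have hop : applyOp y s TOp.trep = s.take i ++ some wy[i] :: s.drop (i+1) := by
            show s.set (firstDiff s y) (y.getD (firstDiff s y) default) = _
            rw [← hidef, hgetD]
            have h1 := set_append_len (s.take i) (some ws[i] : Option α) (some wy[i])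
              (s.drop (i+1))
            rw [hPlen] at h1
            conv_lhs => rw [hsdec]
            exact h1
          refine ⟨TOp.trep, ⟨ws.take i ++ wy[i] :: ws.drop (i+1), by
              rw [hop, htakeS, hdropS1, hU]; simp⟩, ?_, ?_, his, hiy, ?_, ?_, ?_⟩
          · rw [hop]
            conv_lhs => rw [hy2]
            rw [ED_append_left, hdropY2, hdropS1, ED_cons_cons_same]
            rw [hU] at hrep
            exact hrep
          · intro j hj; rw [hop]; exact hprefix _ j hj
          · intro h; exact absurd h (by decide)
          · intro h; exact absurd h (by decide)
          · intro _
            refine ⟨?_, by omega, by omega, ?_⟩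
            · rw [hop]
              simp only [List.length_append, hPlen, List.length_cons, List.length_drop]
              omega
            · rw [hop]
              have h1 := getElem?_append_len (s.take i) (some wy[i] : Option α) (s.drop (i+1))
              rw [hPlen] at h1
              rw [h1, hyi]
    · -- Case 2 : s[i] = none, insert
      have hiw : i = ws.length := by omega
      have hSd : s.drop i = [none] := by
        rw [hdropS, hiw, List.drop_length]; rfl
      have hkey2 : ED [(none : Option α)] (some wy[i] :: V) = k + 1 := by
        rw [← hSd, ← hdropY2]; exact hkey
      have hival : ED [(none : Option α)] V = wy.length - (i+1) := by
        have h1 := ED_DT ([] : List α) (wy.drop (i+1))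
        simp only [List.map_nil, List.nil_append] at h1
        rw [← hV] at h1
        rw [h1, ED_nil_left, List.length_drop]
      have hrval : ED ([] : List (Option α)) V = wy.length - i := by
        rw [ED_nil_left, hV]
        simp only [List.length_append, List.length_map, List.length_drop, List.length_cons,
          List.length_nil]
        omega
      have hcc2 : k + 1 = min (1 + ED ([] : List (Option α)) (some wy[i] :: V))
          (min (1 + ED [(none : Option α)] V) (1 + ED ([] : List (Option α)) V)) := by
        rw [← hkey2]
        show ED ((none : Option α) :: []) (some wy[i] :: V) = _
        rw [ED_cons_cons, if_neg (by simp)]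
      have hdval : ED ([] : List (Option α)) (some wy[i] :: V) = (wy.length - i) + 1 := by
        rw [ED_nil_left]
        simp only [List.length_cons, hV, List.length_append, List.length_map, List.length_drop,
          List.length_nil]
        omega
      have hinsK : ED (s.drop i) V = k := by rw [hSd]; omega
      have htk : ws.take i = ws := by rw [hiw, List.take_length]
      refine ⟨TOp.tins, ⟨ws ++ [wy[i]], by
          rw [hopIns, htakeS, hSd, htk]; simp⟩,
        hopInsED hinsK, hopInsPre, his, hiy, ?_, ?_, ?_⟩
      · intro h; exact absurd h (by decide)
      · intro _; exact ⟨hopInsLen, by omega, hopInsAt⟩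
      · intro h; exact absurd h (by decide)
  · -- Case 1 : y[i] = none, delete
    have hiw : i = wy.length := by omega
    have hYd : y.drop i = [none] := by
      rw [hdropY, hiw, List.drop_length]; rfl
    have halt : i < ws.length := by
      rcases Nat.lt_or_ge i ws.length with h | h
      · exact h
      · exfalso
        have hiw2 : i = ws.length := by omega
        have h1 : s[i]? = some none := by rw [hws, hiw2]; exact DT_getElem?_eq ws
        have h2 : y[i]? = some none := by rw [hwy, hiw]; exact DT_getElem?_eq wy
        exact hspec1 (by rw [h1, h2])
    have hdropS1 : s.drop (i+1) = (ws.drop (i+1)).map some ++ [none] := by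
      rw [hws, DT_drop (by omega)]
    set U : List (Option α) := (ws.drop (i+1)).map some ++ [none] with hU
    have hdropS2 : s.drop i = some ws[i] :: U := by
      rw [hdropS, List.drop_eq_getElem_cons halt]; rfl
    have hkey2 : ED (some ws[i] :: U) [(none : Option α)] = k + 1 := by
      rw [← hdropS2, ← hYd]; exact hkey
    have hdval : ED U [(none : Option α)] = ws.length - (i+1) := by
      have h1 := ED_DT (ws.drop (i+1)) ([] : List α)
      simp only [List.map_nil, List.nil_append] at h1
      rw [← hU] at h1
      rw [h1, ED_nil_right, List.length_drop]
    have hival : ED (some ws[i] :: U) ([] : List (Option α)) = (ws.length - i) + 1 := by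
      rw [ED_nil_right]
      simp only [List.length_cons, hU, List.length_append, List.length_map, List.length_drop,
        List.length_nil]
      omega
    have hrval : ED U ([] : List (Option α)) = ws.length - i := by
      rw [ED_nil_right, hU]
      simp only [List.length_append, List.length_map, List.length_drop, List.length_cons,
        List.length_nil]
      omega
    have hcc2 : k + 1 = min (1 + ED U [(none : Option α)])
        (min (1 + ED (some ws[i] :: U) ([] : List (Option α)))
          (1 + ED U ([] : List (Option α)))) := by
      rw [← hkey2]
      show ED (some ws[i] :: U) ((none : Option α) :: []) = _
      rw [ED_cons_cons, if_neg (by simp)]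
    have hdelK : ED U (y.drop i) = k := by rw [hYd]; omega
    have hop : applyOp y s TOp.tdel = s.take i ++ U := by
      show s.eraseIdx (firstDiff s y) = _
      rw [← hidef, List.eraseIdx_eq_take_drop_succ, hdropS1]
    refine ⟨TOp.tdel, ⟨ws.take i ++ ws.drop (i+1), by rw [hop, htakeS, hU]; simp⟩,
      ?_, ?_, his, hiy, ?_, ?_, ?_⟩
    · rw [hop]
      conv_lhs => rw [hy2]
      rw [ED_append_left]
      exact hdelK
    · intro j hj; rw [hop]; exact hprefix _ j hj
    · intro _
      constructor
      · rw [hop]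
        simp only [List.length_append, hPlen, hU, List.length_cons, List.length_map,
          List.length_drop, List.length_nil]
        omega
      · omega
    · intro h; exact absurd h (by decide)
    · intro h; exact absurd h (by decide)

end

section
variable {α : Type} [DecidableEq α]

lemma main {y : List (Option α)} (hy : DollarTerminal y) :
    ∀ (k : ℕ) (s : List (Option α)), DollarTerminal s → ED s y = k →
    ∃ T : List TOp, T.length = k ∧ applyT s y T = y ∧
      (∀ j < k, applyT s y (T.take j) ≠ y) ∧
      T.countP (fun o => decide (o = TOp.tdel ∨ o = TOp.trep)) + firstDiff s y < s.length ∧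
      T.countP (fun o => decide (o = TOp.tins ∨ o = TOp.trep)) + firstDiff s y < y.length
  | 0, s, hs, hED => by
    have hsy : s = y := (ED_eq_zero_iff s y).mp hED
    subst hsy
    refine ⟨[], rfl, rfl, by omega, ?_, ?_⟩ <;>
    · rw [firstDiff_self]
      simp only [List.countP_nil]
      obtain ⟨w, hw⟩ := hs
      rw [hw]; simp
  | k+1, s, hs, hED => by
    obtain ⟨op, hDT, hED', hpre, his, hiy, hdel, hins, hrep⟩ := step hs hy hED
    obtain ⟨T', hlen, happ, hproper, hcdr, hcir⟩ := main hy k (applyOp y s op) hDT hED'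
    have hne : s ≠ y := by intro h; rw [h, ED_refl] at hED; omega
    have hcounts :
        (op :: T').countP (fun o => decide (o = TOp.tdel ∨ o = TOp.trep)) + firstDiff s y
          < s.length ∧
        (op :: T').countP (fun o => decide (o = TOp.tins ∨ o = TOp.trep)) + firstDiff s y
          < y.length := by
      have e1d : (TOp.tdel :: T').countP (fun o => decide (o = TOp.tdel ∨ o = TOp.trep)) =
          T'.countP (fun o => decide (o = TOp.tdel ∨ o = TOp.trep)) + 1 := by simp
      have e2d : (TOp.tdel :: T').countP (fun o => decide (o = TOp.tins ∨ o = TOp.trep)) =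
          T'.countP (fun o => decide (o = TOp.tins ∨ o = TOp.trep)) := by simp
      have e1i : (TOp.tins :: T').countP (fun o => decide (o = TOp.tdel ∨ o = TOp.trep)) =
          T'.countP (fun o => decide (o = TOp.tdel ∨ o = TOp.trep)) := by simp
      have e2i : (TOp.tins :: T').countP (fun o => decide (o = TOp.tins ∨ o = TOp.trep)) =
          T'.countP (fun o => decide (o = TOp.tins ∨ o = TOp.trep)) + 1 := by simp
      have e1r : (TOp.trep :: T').countP (fun o => decide (o = TOp.tdel ∨ o = TOp.trep)) =
          T'.countP (fun o => decide (o = TOp.tdel ∨ o = TOp.trep)) + 1 := by simp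
      have e2r : (TOp.trep :: T').countP (fun o => decide (o = TOp.tins ∨ o = TOp.trep)) =
          T'.countP (fun o => decide (o = TOp.tins ∨ o = TOp.trep)) + 1 := by simp
      by_cases hk0 : k = 0
      · have hT' : T' = [] := by rw [← List.length_eq_zero_iff, hlen, hk0]
        subst hT'
        simp only [List.countP_nil, Nat.zero_add] at e1d e2d e1i e2i e1r e2r
        cases op with
        | tins => have h := hins rfl; rw [e1i, e2i]; constructor <;> omega
        | tdel => have h := hdel rfl; rw [e1d, e2d]; constructor <;> omega
        | trep => have h := hrep rfl; rw [e1r, e2r]; constructor <;> omega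
      · have hne' : applyOp y s op ≠ y := by
          intro h; rw [h, ED_refl] at hED'; omega
        cases op with
        | tdel =>
          have h := hdel rfl
          have hge : firstDiff s y ≤ firstDiff (applyOp y s TOp.tdel) y :=
            firstDiff_ge hne' hpre
          rw [e1d, e2d]
          constructor <;> omega
        | tins =>
          have h := hins rfl
          have hge : firstDiff s y + 1 ≤ firstDiff (applyOp y s TOp.tins) y := by
            apply firstDiff_ge hne'
            intro j hj
            rcases Nat.lt_or_ge j (firstDiff s y) with h2 | h2
            · exact hpre j h2
            · have h3 : j = firstDiff s y := by omega
              rw [h3]; exact h.2.2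
          rw [e1i, e2i]
          constructor <;> omega
        | trep =>
          have h := hrep rfl
          have hge : firstDiff s y + 1 ≤ firstDiff (applyOp y s TOp.trep) y := by
            apply firstDiff_ge hne'
            intro j hj
            rcases Nat.lt_or_ge j (firstDiff s y) with h2 | h2
            · exact hpre j h2
            · have h3 : j = firstDiff s y := by omega
              rw [h3]; exact h.2.2.2
          rw [e1r, e2r]
          constructor <;> omega
    refine ⟨op :: T', by simp [hlen], by rw [applyT_cons]; exact happ, ?_, hcounts.1, hcounts.2⟩
    intro j hj
    cases j with
    | zero => simpa [applyT_nil] using hne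
    | succ j =>
      rw [List.take_succ_cons, applyT_cons]
      exact hproper j (by omega)


end

/-- if `ED(x,y) = r` then there is a transformation of length `r` solving
`x·$` and `y·$`, and none of length `< r`. -/
theorem stmt5 {α : Type} [DecidableEq α] (x y : List α) (r : ℕ) (hED : ED x y = r) :
    (∃ T : List TOp, T.length = r ∧
      Solves T (x.map some ++ [none]) (y.map some ++ [none])) ∧
    ¬ ∃ T' : List TOp, T'.length < r ∧
      Solves T' (x.map some ++ [none]) (y.map some ++ [none]) := by
  have hDX : DollarTerminal (x.map some ++ [none]) := ⟨x, rfl⟩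
  have hDY : DollarTerminal (y.map some ++ [none]) := ⟨y, rfl⟩
  have hEDxy : ED (x.map some ++ [none]) (y.map some ++ [none]) = r := by
    rw [ED_DT]; exact hED
  constructor
  · obtain ⟨T, hlen, happ, hproper, hcdr, hcir⟩ := main hDY r _ hDX hEDxy
    refine ⟨T, hlen, ⟨by omega, by omega⟩, happ, ?_⟩
    intro j hj
    exact hproper j (by omega)
  · rintro ⟨T', hlen, hval, happ, -⟩
    have h1 := ED_le_applyT_length _ T' _ happ
    omega


end EditLSH
end
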